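/- Let m, n ≥ r ≥ 1 and let B, B̃ = B + F ∈ ℝ^{m×n} both have rank r. Let B = UΣVᵀ and B̃ = ŨΣ̃Ṽᵀ be full singular value decompositions: U ∈ 𝕆^{m×m}, V ∈ 𝕆^{n×n} orthogonal, Σ ∈ ℝ^{m×n} with diagonal entries σ_1 ≥ … ≥ σ_r > 0 and all other entries zero, and analogously for Ũ, Σ̃, Ṽ with σ̃_1 ≥ … ≥ σ̃_r > 0. Write U₁ = U_{(:,1:r)}, U₂ = U_{(:,r+1:m)}, Ũ₁ = Ũ_{(:,1:r)}, V₁ = V_{(:,1:r)}, V₂ = V_{(:,r+1:n)}, Ṽ₁ = Ṽ_{(:,1:r)}. Then max{ ‖U₂ᵀŨ₁‖₂, ‖V₂ᵀṼ₁‖₂ } ≤ ‖F‖₂ / max{σ_r, σ̃_r}. (The left-hand side is max{‖sin Θ(𝒰,𝒰̃)‖₂, ‖sin Θ(𝒱,𝒱̃)‖₂} for the corresponding singular subspaces.) -/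
import Mathlib


open Matrix

noncomputable def specNorm {m n : ℕ} (A : Matrix (Fin m) (Fin n) ℝ) : ℝ :=
  ‖(Matrix.toEuclideanLin A).toContinuousLinearMap‖

def headCols {m : ℕ} (r : ℕ) (h : r ≤ m) (A : Matrix (Fin m) (Fin m) ℝ) :
    Matrix (Fin m) (Fin r) ℝ :=
  A.submatrix id (Fin.castLE h)

def tailCols {m : ℕ} (r : ℕ) (h : r ≤ m) (A : Matrix (Fin m) (Fin m) ℝ) :
    Matrix (Fin m) (Fin (m - r)) ℝ :=
  A.submatrix id fun j => Fin.cast (Nat.add_sub_cancel' h) (Fin.natAdd r j)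

namespace Wedin

open scoped Matrix.Norms.L2Operator

/-- tail embedding -/
def tl {m r : ℕ} (h : r ≤ m) : Fin (m - r) → Fin m :=
  fun j => Fin.cast (Nat.add_sub_cancel' h) (Fin.natAdd r j)

lemma tl_val {m r : ℕ} (h : r ≤ m) (j : Fin (m - r)) : (tl h j : ℕ) = r + j := by
  simp [tl]

lemma tl_inj {m r : ℕ} (h : r ≤ m) : Function.Injective (tl h) := by
  intro a b hab
  have := congrArg (fun x : Fin m => (x : ℕ)) hab
  simp [tl_val] at this
  exact Fin.ext this

def Q {k : ℕ} (v : Fin k → ℝ) : ℝ := ∑ i, v i ^ 2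

lemma Q_nonneg {k : ℕ} (v : Fin k → ℝ) : 0 ≤ Q v :=
  Finset.sum_nonneg fun i _ => sq_nonneg _

lemma Q_eq_zero {k : ℕ} {v : Fin k → ℝ} (h : Q v ≤ 0) : v = 0 := by
  have h0 : Q v = 0 := le_antisymm h (Q_nonneg v)
  funext i
  have := (Finset.sum_eq_zero_iff_of_nonneg (fun i _ => sq_nonneg (v i))).mp h0 i
    (Finset.mem_univ i)
  simpa using pow_eq_zero_iff (two_ne_zero) |>.mp this

lemma specNorm_eq_l2 {m n : ℕ} (A : Matrix (Fin m) (Fin n) ℝ) : specNorm A = ‖A‖ := rfl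

lemma specNorm_nonneg {m n : ℕ} (A : Matrix (Fin m) (Fin n) ℝ) : 0 ≤ specNorm A := by
  rw [specNorm_eq_l2]; exact norm_nonneg _

lemma specNorm_neg {m n : ℕ} (A : Matrix (Fin m) (Fin n) ℝ) : specNorm (-A) = specNorm A := by
  simp only [specNorm_eq_l2]; exact norm_neg _

lemma specNorm_mul_le {m n l : ℕ} (A : Matrix (Fin m) (Fin n) ℝ) (B : Matrix (Fin n) (Fin l) ℝ) :
    specNorm (A * B) ≤ specNorm A * specNorm B := by
  simp only [specNorm_eq_l2]; exact Matrix.l2_opNorm_mul A B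

lemma specNorm_transpose {m n : ℕ} (A : Matrix (Fin m) (Fin n) ℝ) :
    specNorm Aᵀ = specNorm A := by
  simp only [specNorm_eq_l2]
  have e : Aᴴ = Aᵀ := by ext i j; simp [Matrix.conjTranspose_apply]
  rw [← e, Matrix.l2_opNorm_conjTranspose]

lemma enorm_eq {k : ℕ} (x : EuclideanSpace ℝ (Fin k)) :
    ‖x‖ = Real.sqrt (Q (fun i => x i)) := by
  rw [EuclideanSpace.norm_eq]
  congr 1
  unfold Q
  exact Finset.sum_congr rfl fun i _ => by rw [Real.norm_eq_abs, sq_abs]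

noncomputable def toEuc {k : ℕ} (v : Fin k → ℝ) : EuclideanSpace ℝ (Fin k) := (WithLp.equiv 2 _).symm v

lemma specNorm_le_sq {m n : ℕ} {A : Matrix (Fin m) (Fin n) ℝ} {c : ℝ} (hc : 0 ≤ c)
    (h : ∀ x : Fin n → ℝ, Q (A *ᵥ x) ≤ c ^ 2 * Q x) : specNorm A ≤ c := by
  unfold specNorm
  refine ContinuousLinearMap.opNorm_le_bound _ hc fun x => ?_
  have h1 : ‖(Matrix.toEuclideanLin A).toContinuousLinearMap x‖
      = Real.sqrt (Q (A *ᵥ (fun j => x j))) := by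
    rw [enorm_eq]; rfl
  rw [h1, enorm_eq x]
  calc Real.sqrt (Q (A *ᵥ fun j => x j)) ≤ Real.sqrt (c ^ 2 * Q (fun j => x j)) :=
        Real.sqrt_le_sqrt (h _)
    _ = c * Real.sqrt (Q (fun j => x j)) := by
        rw [Real.sqrt_mul (sq_nonneg c), Real.sqrt_sq hc]

lemma q_mulVec_le {m n : ℕ} (A : Matrix (Fin m) (Fin n) ℝ) (x : Fin n → ℝ) :
    Q (A *ᵥ x) ≤ specNorm A ^ 2 * Q x := by
  have h1 : ‖(Matrix.toEuclideanLin A).toContinuousLinearMap (toEuc x)‖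
      = Real.sqrt (Q (A *ᵥ x)) := by rw [enorm_eq]; rfl
  have h2 : ‖toEuc x‖ = Real.sqrt (Q x) := by rw [enorm_eq]; rfl
  have h : Real.sqrt (Q (A *ᵥ x)) ≤ specNorm A * Real.sqrt (Q x) := by
    have h := (Matrix.toEuclideanLin A).toContinuousLinearMap.le_opNorm (toEuc x)
    rw [h1, h2] at h
    exact h
  calc Q (A *ᵥ x) = Real.sqrt (Q (A *ᵥ x)) ^ 2 := (Real.sq_sqrt (Q_nonneg _)).symm
    _ ≤ (specNorm A * Real.sqrt (Q x)) ^ 2 :=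
        pow_le_pow_left₀ (Real.sqrt_nonneg _) h 2
    _ = specNorm A ^ 2 * Q x := by rw [mul_pow, Real.sq_sqrt (Q_nonneg _)]

lemma q_eq_dot {k : ℕ} (v : Fin k → ℝ) : Q v = v ⬝ᵥ v :=
  Finset.sum_congr rfl fun i _ => sq (v i) ▸ by ring

lemma q_mulVec_orth {m n : ℕ} {A : Matrix (Fin m) (Fin n) ℝ} (hA : Aᵀ * A = 1)
    (x : Fin n → ℝ) : Q (A *ᵥ x) = Q x := by
  rw [q_eq_dot, q_eq_dot]
  calc (A *ᵥ x) ⬝ᵥ (A *ᵥ x) = ((A *ᵥ x) ᵥ* A) ⬝ᵥ x := Matrix.dotProduct_mulVec _ _ _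
    _ = (Aᵀ *ᵥ (A *ᵥ x)) ⬝ᵥ x := by rw [Matrix.mulVec_transpose]
    _ = ((Aᵀ * A) *ᵥ x) ⬝ᵥ x := by rw [Matrix.mulVec_mulVec]
    _ = x ⬝ᵥ x := by rw [hA, Matrix.one_mulVec]

lemma specNorm_le_one {m n : ℕ} {A : Matrix (Fin m) (Fin n) ℝ} (hA : Aᵀ * A = 1) :
    specNorm A ≤ 1 :=
  specNorm_le_sq zero_le_one fun x => by rw [q_mulVec_orth hA]; simp

lemma specNorm_diagonal_le {k : ℕ} {d : Fin k → ℝ} {c : ℝ} (hc : 0 ≤ c)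
    (h : ∀ i, |d i| ≤ c) : specNorm (Matrix.diagonal d) ≤ c := by
  refine specNorm_le_sq hc fun x => ?_
  unfold Q
  rw [Finset.mul_sum]
  refine Finset.sum_le_sum fun i _ => ?_
  rw [Matrix.mulVec_diagonal, mul_pow]
  have : d i ^ 2 ≤ c ^ 2 := by
    rw [← sq_abs]
    exact pow_le_pow_left₀ (abs_nonneg _) (h i) 2
  exact mul_le_mul_of_nonneg_right this (sq_nonneg _)

lemma sum_split {m r : ℕ} (h : r ≤ m) (f : Fin m → ℝ) :
    ∑ k, f k = (∑ i : Fin r, f (Fin.castLE h i)) + ∑ j : Fin (m - r), f (tl h j) := by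
  have e : r + (m - r) = m := Nat.add_sub_cancel' h
  rw [← Fintype.sum_equiv (finCongr e) (fun i => f (Fin.cast e i)) f (fun i => rfl)]
  rw [Fin.sum_univ_add]
  congr 1

lemma orth_submatrix {k l : ℕ} {W : Matrix (Fin k) (Fin k) ℝ} (hW : Wᵀ * W = 1)
    {f : Fin l → Fin k} (hf : Function.Injective f) :
    (W.submatrix id f)ᵀ * W.submatrix id f = 1 := by
  ext i j
  have h2 := congrFun (congrFun hW (f i)) (f j)
  simp only [Matrix.mul_apply, Matrix.transpose_apply, Matrix.submatrix_apply, id] at h2 ⊢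
  rw [h2, Matrix.one_apply, Matrix.one_apply]
  simp [hf.eq_iff]

lemma tailT_mul_head {m : ℕ} (r : ℕ) (h : r ≤ m) (A B : Matrix (Fin m) (Fin m) ℝ) :
    (tailCols r h A)ᵀ * headCols r h B
      = (Aᵀ * B).submatrix (tl h) (Fin.castLE h) := by
  ext i j
  simp [tailCols, headCols, tl, Matrix.mul_apply]

lemma mul_sub_right {a b c d : ℕ} (M : Matrix (Fin a) (Fin b) ℝ) (A : Matrix (Fin b) (Fin c) ℝ)
    (g : Fin d → Fin c) : M * A.submatrix id g = (M * A).submatrix id g := by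
  ext i j; simp [Matrix.mul_apply]

lemma fact1 {m r : ℕ} (h : r ≤ m) {W : Matrix (Fin m) (Fin m) ℝ} (hW : Wᵀ * W = 1)
    (x : Fin r → ℝ) :
    Q ((W.submatrix (Fin.castLE h) (Fin.castLE h)) *ᵥ x)
      + Q ((W.submatrix (tl h) (Fin.castLE h)) *ᵥ x) = Q x := by
  classical
  set xe : Fin m → ℝ := fun k => if hk : (k : ℕ) < r then x ⟨k, hk⟩ else 0 with hxe
  have hx1 : ∀ i : Fin r, xe (Fin.castLE h i) = x i := by
    intro i; simp [hxe]
  have hx2 : ∀ j : Fin (m - r), xe (tl h j) = 0 := by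
    intro j
    have hj : ¬ ((tl h j : ℕ) < r) := by rw [tl_val]; omega
    simp [hxe, hj]
  have hWx : ∀ k, (W *ᵥ xe) k = ∑ i : Fin r, W k (Fin.castLE h i) * x i := by
    intro k
    show (fun j => W k j) ⬝ᵥ xe = _
    rw [dotProduct, sum_split h (fun l => W k l * xe l)]
    simp [hx1, hx2]
  have h11 : ∀ i : Fin r, ((W.submatrix (Fin.castLE h) (Fin.castLE h)) *ᵥ x) i
      = (W *ᵥ xe) (Fin.castLE h i) := by
    intro i
    rw [hWx]
    simp [Matrix.mulVec, dotProduct]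
  have h21 : ∀ j : Fin (m - r), ((W.submatrix (tl h) (Fin.castLE h)) *ᵥ x) j
      = (W *ᵥ xe) (tl h j) := by
    intro j
    rw [hWx]
    simp [Matrix.mulVec, dotProduct]
  have key1 : Q (W *ᵥ xe) = Q xe := q_mulVec_orth hW xe
  have hQxe : Q xe = Q x := by
    unfold Q
    rw [sum_split h]
    simp [hx1, hx2]
  have hsplitQ : Q (W *ᵥ xe) = Q ((W.submatrix (Fin.castLE h) (Fin.castLE h)) *ᵥ x)
      + Q ((W.submatrix (tl h) (Fin.castLE h)) *ᵥ x) := by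
    unfold Q
    rw [sum_split h (fun k => (W *ᵥ xe) k ^ 2)]
    congr 1
    · exact Finset.sum_congr rfl fun i _ => by rw [h11]
    · exact Finset.sum_congr rfl fun j _ => by rw [h21]
  rw [← hsplitQ, key1, hQxe]

lemma bridge {m r : ℕ} (h : r ≤ m) {W : Matrix (Fin m) (Fin m) ℝ} (hW : Wᵀ * W = 1) :
    specNorm (W.submatrix (tl h) (Fin.castLE h))
      ≤ specNorm ((Wᵀ).submatrix (tl h) (Fin.castLE h)) := by
  classical
  have hW12 : (Wᵀ).submatrix (tl h) (Fin.castLE h)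
      = (W.submatrix (Fin.castLE h) (tl h))ᵀ := rfl
  rw [hW12, specNorm_transpose]
  set c := specNorm (W.submatrix (Fin.castLE h) (tl h)) with hc
  have hc0 : 0 ≤ c := specNorm_nonneg _
  by_cases hc1 : 1 ≤ c
  · refine le_trans ?_ hc1
    refine specNorm_le_sq zero_le_one fun x => ?_
    have hf := fact1 h hW x
    have hn := Q_nonneg ((W.submatrix (Fin.castLE h) (Fin.castLE h)) *ᵥ x)
    rw [one_pow, one_mul]
    linarith
  · push_neg at hc1
    have hWWt : W * Wᵀ = 1 := mul_eq_one_comm.mp hW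
    have hWt : (Wᵀ)ᵀ * Wᵀ = 1 := by rwa [Matrix.transpose_transpose]
    set s : ℝ := 1 - c ^ 2 with hs
    have hs0 : 0 < s := by nlinarith
    set B := W.submatrix (Fin.castLE h) (Fin.castLE h) with hB
    have hBT : (Wᵀ).submatrix (Fin.castLE h) (Fin.castLE h) = Bᵀ := rfl
    have hspec : specNorm ((Wᵀ).submatrix (tl h) (Fin.castLE h)) = c := by
      rw [hW12, specNorm_transpose]
    have hb : ∀ y : Fin r → ℝ, s * Q y ≤ Q (Bᵀ *ᵥ y) := by
      intro y
      have h1 := fact1 h hWt y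
      rw [hBT] at h1
      have h2 := q_mulVec_le ((Wᵀ).submatrix (tl h) (Fin.castLE h)) y
      rw [hspec] at h2
      rw [hs, sub_mul, one_mul]
      linarith
    have hdet : B.det ≠ 0 := by
      intro hdet0
      have hdetT : (Bᵀ).det = 0 := by rw [Matrix.det_transpose]; exact hdet0
      obtain ⟨v, hv0, hv⟩ := (Matrix.exists_mulVec_eq_zero_iff).mpr hdetT
      have hbv := hb v
      rw [hv] at hbv
      have hq0 : Q (0 : Fin r → ℝ) = 0 := by simp [Q]
      rw [hq0] at hbv
      have hQv : Q v ≤ 0 := by nlinarith [Q_nonneg v]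
      exact hv0 (Q_eq_zero hQv)
    have hBunit : IsUnit B.det := isUnit_iff_ne_zero.mpr hdet
    have hBTunit : IsUnit (Bᵀ).det := by rw [Matrix.det_transpose]; exact hBunit
    have hinv : specNorm ((Bᵀ)⁻¹) ≤ Real.sqrt s⁻¹ := by
      refine specNorm_le_sq (Real.sqrt_nonneg _) fun z => ?_
      rw [Real.sq_sqrt (by positivity)]
      have hy := hb ((Bᵀ)⁻¹ *ᵥ z)
      rw [Matrix.mulVec_mulVec, Matrix.mul_nonsing_inv _ hBTunit, Matrix.one_mulVec] at hy
      rw [← div_eq_inv_mul]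
      rw [le_div_iff₀ hs0]
      linarith
    have hBinv : specNorm (B⁻¹) ≤ Real.sqrt s⁻¹ := by
      rw [← specNorm_transpose, Matrix.transpose_nonsing_inv]
      exact hinv
    have hlow : ∀ x : Fin r → ℝ, s * Q x ≤ Q (B *ᵥ x) := by
      intro x
      have h1 := q_mulVec_le (B⁻¹) (B *ᵥ x)
      rw [Matrix.mulVec_mulVec, Matrix.nonsing_inv_mul _ hBunit, Matrix.one_mulVec] at h1
      have h2 : specNorm (B⁻¹) ^ 2 ≤ s⁻¹ := by
        calc specNorm (B⁻¹) ^ 2 ≤ Real.sqrt s⁻¹ ^ 2 :=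
              pow_le_pow_left₀ (specNorm_nonneg _) hBinv 2
          _ = s⁻¹ := Real.sq_sqrt (by positivity)
      have h3 : Q x ≤ s⁻¹ * Q (B *ᵥ x) :=
        le_trans h1 (mul_le_mul_of_nonneg_right h2 (Q_nonneg _))
      calc s * Q x ≤ s * (s⁻¹ * Q (B *ᵥ x)) := mul_le_mul_of_nonneg_left h3 hs0.le
        _ = Q (B *ᵥ x) := by field_simp
    refine specNorm_le_sq hc0 fun x => ?_
    have hf := fact1 h hW x
    rw [← hB] at hf
    have hl := hlow x
    nlinarith [Q_nonneg x]

lemma castLE_inj {a b : ℕ} (h : a ≤ b) : Function.Injective (Fin.castLE h) := by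
  intro x y hxy
  have := congrArg (fun t : Fin b => (t : ℕ)) hxy
  exact Fin.ext this

lemma key {m n r : ℕ} (hr : 1 ≤ r) (hrm : r ≤ m) (hrn : r ≤ n)
    (G : Matrix (Fin m) (Fin n) ℝ)
    (U Ut : Matrix (Fin m) (Fin m) ℝ) (V Vt : Matrix (Fin n) (Fin n) ℝ)
    (S St : Matrix (Fin m) (Fin n) ℝ) (sgt : Fin r → ℝ)
    (hU : Uᵀ * U = 1) (hVt : Vtᵀ * Vt = 1)
    (hSrows : ∀ (i : Fin m) (j : Fin n), r ≤ (i : ℕ) → S i j = 0)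
    (hStcol : ∀ (k : Fin m) (j : Fin r),
      St k (Fin.castLE hrn j) = if (k : ℕ) = (j : ℕ) then sgt j else 0)
    (hordt : ∀ i j : Fin r, i ≤ j → sgt j ≤ sgt i) (hpost : ∀ i, 0 < sgt i)
    (heq : U * S * Vᵀ + G = Ut * St * Vtᵀ) :
    specNorm ((tailCols r hrm U)ᵀ * headCols r hrm Ut)
      ≤ specNorm G / sgt ⟨r - 1, by omega⟩ := by
  classical
  set l : Fin r := ⟨r - 1, by omega⟩ with hl
  have hmin : ∀ i, sgt l ≤ sgt i := by
    intro i
    refine hordt i l ?_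
    rw [Fin.le_def, hl]
    have := i.2
    simp
    omega
  set D := Matrix.diagonal sgt with hD
  set Di := Matrix.diagonal (fun i => (sgt i)⁻¹) with hDi
  have hDDi : D * Di = 1 := by
    rw [hD, hDi, Matrix.diagonal_mul_diagonal]
    rw [show (fun i => sgt i * (sgt i)⁻¹) = fun _ => (1 : ℝ) from
      funext fun i => mul_inv_cancel₀ (hpost i).ne']
    exact Matrix.diagonal_one
  have step1 : (tailCols r hrm U)ᵀ * (U * S) = 0 := by
    have e0 : (tailCols r hrm U)ᵀ = Uᵀ.submatrix (tl hrm) id := by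
      ext i j; simp [tailCols, tl]
    have e1 : Uᵀ.submatrix (tl hrm) id * (U * S) = (Uᵀ * (U * S)).submatrix (tl hrm) id := by
      ext i j; simp [Matrix.mul_apply]
    rw [e0, e1, ← Matrix.mul_assoc, hU, Matrix.one_mul]
    ext i j
    simp only [Matrix.submatrix_apply, id, Matrix.zero_apply]
    exact hSrows _ _ (by rw [tl_val]; omega)
  have step2 : (Ut * St).submatrix id (Fin.castLE hrn) = headCols r hrm Ut * D := by
    ext i j
    rw [hD, Matrix.mul_diagonal]
    simp only [Matrix.submatrix_apply, id, Matrix.mul_apply, headCols]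
    rw [Finset.sum_eq_single (Fin.castLE hrm j)]
    · rw [hStcol]; simp
    · intro k _ hk
      rw [hStcol]
      have hkj : ¬ ((k : ℕ) = (j : ℕ)) := by
        intro hc
        exact hk (Fin.ext (by simpa using hc))
      simp [hkj]
    · intro hk; exact absurd (Finset.mem_univ _) hk
  have h2 : (Ut * St * Vtᵀ) * headCols r hrn Vt = headCols r hrm Ut * D := by
    rw [show headCols r hrn Vt = Vt.submatrix id (Fin.castLE hrn) from rfl]
    rw [mul_sub_right, Matrix.mul_assoc (Ut * St), hVt, Matrix.mul_one, step2]
  have step3 : ((tailCols r hrm U)ᵀ * headCols r hrm Ut) * D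
      = (tailCols r hrm U)ᵀ * G * headCols r hrn Vt := by
    have h1 : (tailCols r hrm U)ᵀ * ((U * S * Vᵀ) + G) * headCols r hrn Vt
        = (tailCols r hrm U)ᵀ * (Ut * St * Vtᵀ) * headCols r hrn Vt := by rw [heq]
    have h0 : (tailCols r hrm U)ᵀ * (U * S * Vᵀ) = 0 := by
      rw [← Matrix.mul_assoc _ (U * S) Vᵀ, step1, Matrix.zero_mul]
    rw [Matrix.mul_add, Matrix.add_mul, h0, Matrix.zero_mul, zero_add] at h1
    rw [h1, Matrix.mul_assoc _ (Ut * St * Vtᵀ), h2, ← Matrix.mul_assoc]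
  have hXD : (tailCols r hrm U)ᵀ * headCols r hrm Ut
      = (tailCols r hrm U)ᵀ * G * headCols r hrn Vt * Di := by
    calc (tailCols r hrm U)ᵀ * headCols r hrm Ut
        = ((tailCols r hrm U)ᵀ * headCols r hrm Ut) * (D * Di) := by
          rw [hDDi, Matrix.mul_one]
      _ = (((tailCols r hrm U)ᵀ * headCols r hrm Ut) * D) * Di := by
          rw [← Matrix.mul_assoc ((tailCols r hrm U)ᵀ * headCols r hrm Ut) D Di]
      _ = _ := by rw [step3]
  rw [hXD]
  have n1 : specNorm ((tailCols r hrm U)ᵀ) ≤ 1 := by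
    rw [specNorm_transpose]
    exact specNorm_le_one (orth_submatrix hU (tl_inj hrm))
  have n2 : specNorm (headCols r hrn Vt) ≤ 1 :=
    specNorm_le_one (orth_submatrix hVt (castLE_inj hrn))
  have n3 : specNorm Di ≤ (sgt l)⁻¹ := by
    refine specNorm_diagonal_le (inv_nonneg.mpr (hpost l).le) fun i => ?_
    rw [abs_of_pos (inv_pos.mpr (hpost i))]
    exact inv_anti₀ (hpost l) (hmin i)
  have hG := specNorm_nonneg G
  have hTG : specNorm ((tailCols r hrm U)ᵀ * G) ≤ specNorm G := by
    calc specNorm ((tailCols r hrm U)ᵀ * G)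
        ≤ specNorm ((tailCols r hrm U)ᵀ) * specNorm G := specNorm_mul_le _ _
      _ ≤ 1 * specNorm G := mul_le_mul_of_nonneg_right n1 hG
      _ = specNorm G := one_mul _
  have hTGH : specNorm ((tailCols r hrm U)ᵀ * G * headCols r hrn Vt) ≤ specNorm G := by
    calc specNorm ((tailCols r hrm U)ᵀ * G * headCols r hrn Vt)
        ≤ specNorm ((tailCols r hrm U)ᵀ * G) * specNorm (headCols r hrn Vt) :=
          specNorm_mul_le _ _
      _ ≤ specNorm G * 1 := mul_le_mul hTG n2 (specNorm_nonneg _)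
          (le_trans (specNorm_nonneg _) hTG)
      _ = specNorm G := mul_one _
  calc specNorm ((tailCols r hrm U)ᵀ * G * headCols r hrn Vt * Di)
      ≤ specNorm ((tailCols r hrm U)ᵀ * G * headCols r hrn Vt) * specNorm Di :=
        specNorm_mul_le _ _
    _ ≤ specNorm G * (sgt l)⁻¹ := mul_le_mul hTGH n3 (specNorm_nonneg _) hG
    _ = specNorm G / sgt l := by rw [div_eq_mul_inv]

lemma shape_rows {m n r : ℕ} {S : Matrix (Fin m) (Fin n) ℝ} {sg : Fin r → ℝ}
    (hS : ∀ (i : Fin m) (j : Fin n),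
      S i j = if h : (i : ℕ) = (j : ℕ) ∧ (i : ℕ) < r then sg ⟨i, h.2⟩ else 0) :
    ∀ (i : Fin m) (j : Fin n), r ≤ (i : ℕ) → S i j = 0 := by
  intro i j hi
  rw [hS, dif_neg]
  rintro ⟨h1, h2⟩
  omega

lemma shape_col {m n r : ℕ} (hrn : r ≤ n) {S : Matrix (Fin m) (Fin n) ℝ} {sg : Fin r → ℝ}
    (hS : ∀ (i : Fin m) (j : Fin n),
      S i j = if h : (i : ℕ) = (j : ℕ) ∧ (i : ℕ) < r then sg ⟨i, h.2⟩ else 0) :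
    ∀ (k : Fin m) (j : Fin r),
      S k (Fin.castLE hrn j) = if (k : ℕ) = (j : ℕ) then sg j else 0 := by
  intro k j
  rw [hS]
  by_cases hkj : (k : ℕ) = (j : ℕ)
  · have hcond : (k : ℕ) = ((Fin.castLE hrn j : Fin n) : ℕ) ∧ (k : ℕ) < r := by
      refine ⟨by simpa using hkj, ?_⟩
      rw [hkj]; exact j.2
    rw [dif_pos hcond, if_pos hkj]
    congr 1
    exact Fin.ext hkj
  · rw [dif_neg, if_neg hkj]
    rintro ⟨h1, h2⟩
    exact hkj (by simpa using h1)

lemma shape_transpose {m n r : ℕ} {S : Matrix (Fin m) (Fin n) ℝ} {sg : Fin r → ℝ}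
    (hS : ∀ (i : Fin m) (j : Fin n),
      S i j = if h : (i : ℕ) = (j : ℕ) ∧ (i : ℕ) < r then sg ⟨i, h.2⟩ else 0) :
    ∀ (i : Fin n) (j : Fin m),
      Sᵀ i j = if h : (i : ℕ) = (j : ℕ) ∧ (i : ℕ) < r then sg ⟨i, h.2⟩ else 0 := by
  intro i j
  rw [Matrix.transpose_apply, hS j i]
  by_cases h : (i : ℕ) = (j : ℕ) ∧ (i : ℕ) < r
  · have h' : (j : ℕ) = (i : ℕ) ∧ (j : ℕ) < r := by omega
    rw [dif_pos h', dif_pos h]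
    congr 1
    exact Fin.ext h'.1
  · have h' : ¬ ((j : ℕ) = (i : ℕ) ∧ (j : ℕ) < r) := by omega
    rw [dif_neg h', dif_neg h]

end Wedin

open Wedin in
/-- Wedin-type sin Θ bound in the spectral norm for the singular subspaces
of two rank-r matrices B and B̃ = B + F:
max{ ‖U₂ᵀŨ₁‖₂, ‖V₂ᵀṼ₁‖₂ } ≤ ‖F‖₂ / max{σ_r, σ̃_r}. -/
theorem wedin_sin_theta_spec {m n r : ℕ} (hr : 1 ≤ r) (hrm : r ≤ m) (hrn : r ≤ n)
    (B F : Matrix (Fin m) (Fin n) ℝ)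
    (U Ut : Matrix (Fin m) (Fin m) ℝ) (V Vt : Matrix (Fin n) (Fin n) ℝ)
    (S St : Matrix (Fin m) (Fin n) ℝ) (sg sgt : Fin r → ℝ)
    (hU : Uᵀ * U = 1) (hV : Vᵀ * V = 1) (hUt : Utᵀ * Ut = 1) (hVt : Vtᵀ * Vt = 1)
    (hS : ∀ (i : Fin m) (j : Fin n),
      S i j = if h : (i : ℕ) = (j : ℕ) ∧ (i : ℕ) < r then sg ⟨i, h.2⟩ else 0)
    (hSt : ∀ (i : Fin m) (j : Fin n),
      St i j = if h : (i : ℕ) = (j : ℕ) ∧ (i : ℕ) < r then sgt ⟨i, h.2⟩ else 0)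
    (hord : ∀ i j : Fin r, i ≤ j → sg j ≤ sg i)
    (hordt : ∀ i j : Fin r, i ≤ j → sgt j ≤ sgt i)
    (hpos : ∀ i, 0 < sg i) (hpost : ∀ i, 0 < sgt i)
    (hB : B = U * S * Vᵀ) (hBt : B + F = Ut * St * Vtᵀ)
    (hrkB : B.rank = r) (hrkBt : (B + F).rank = r) :
    max (specNorm ((tailCols r hrm U)ᵀ * headCols r hrm Ut))
        (specNorm ((tailCols r hrn V)ᵀ * headCols r hrn Vt))
      ≤ specNorm F / max (sg ⟨r - 1, by omega⟩) (sgt ⟨r - 1, by omega⟩) := by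
  classical
  have hUUt : U * Uᵀ = 1 := mul_eq_one_comm.mp hU
  have hVVt : V * Vᵀ = 1 := mul_eq_one_comm.mp hV
  -- transposed SVD equations
  have eB : (U * S * Vᵀ)ᵀ = V * Sᵀ * Uᵀ := by
    rw [Matrix.transpose_mul, Matrix.transpose_mul, Matrix.transpose_transpose,
      Matrix.mul_assoc]
  have eBt : (Ut * St * Vtᵀ)ᵀ = Vt * Stᵀ * Utᵀ := by
    rw [Matrix.transpose_mul, Matrix.transpose_mul, Matrix.transpose_transpose,
      Matrix.mul_assoc]
  have heq1 : U * S * Vᵀ + F = Ut * St * Vtᵀ := by rw [← hB]; exact hBt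
  have heq2 : Ut * St * Vtᵀ + (-F) = U * S * Vᵀ := by rw [← heq1]; abel
  have heq3 : V * Sᵀ * Uᵀ + Fᵀ = Vt * Stᵀ * Utᵀ := by
    rw [← eB, ← eBt, ← Matrix.transpose_add, heq1]
  have heq4 : Vt * Stᵀ * Utᵀ + (-Fᵀ) = V * Sᵀ * Uᵀ := by rw [← heq3]; abel
  -- the four key bounds
  have a1 : specNorm ((tailCols r hrm U)ᵀ * headCols r hrm Ut)
      ≤ specNorm F / sgt ⟨r - 1, by omega⟩ :=
    key hr hrm hrn F U Ut V Vt S St sgt hU hVt (shape_rows hS) (shape_col hrn hSt)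
      hordt hpost heq1
  have a2' : specNorm ((tailCols r hrm Ut)ᵀ * headCols r hrm U)
      ≤ specNorm F / sg ⟨r - 1, by omega⟩ := by
    have := key hr hrm hrn (-F) Ut U Vt V St S sg hUt hV (shape_rows hSt)
      (shape_col hrn hS) hord hpos heq2
    rwa [specNorm_neg] at this
  have b1 : specNorm ((tailCols r hrn V)ᵀ * headCols r hrn Vt)
      ≤ specNorm F / sgt ⟨r - 1, by omega⟩ := by
    have := key hr hrn hrm Fᵀ V Vt U Ut Sᵀ Stᵀ sgt hV hUt
      (shape_rows (shape_transpose hS)) (shape_col hrm (shape_transpose hSt))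
      hordt hpost heq3
    rwa [specNorm_transpose] at this
  have b2' : specNorm ((tailCols r hrn Vt)ᵀ * headCols r hrn V)
      ≤ specNorm F / sg ⟨r - 1, by omega⟩ := by
    have := key hr hrn hrm (-Fᵀ) Vt V Ut U Stᵀ Sᵀ sg hVt hU
      (shape_rows (shape_transpose hSt)) (shape_col hrm (shape_transpose hS))
      hord hpos heq4
    rwa [specNorm_neg, specNorm_transpose] at this
  -- bridges
  have a2 : specNorm ((tailCols r hrm U)ᵀ * headCols r hrm Ut)
      ≤ specNorm F / sg ⟨r - 1, by omega⟩ := by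
    have hW : (Uᵀ * Ut)ᵀ * (Uᵀ * Ut) = 1 := by
      rw [Matrix.transpose_mul, Matrix.transpose_transpose,
        Matrix.mul_assoc Utᵀ U (Uᵀ * Ut), ← Matrix.mul_assoc U Uᵀ Ut, hUUt,
        Matrix.one_mul]
      exact hUt
    have hbr := bridge hrm hW
    rw [tailT_mul_head r hrm U Ut]
    refine le_trans hbr ?_
    have eT : (Uᵀ * Ut)ᵀ = Utᵀ * U := by
      rw [Matrix.transpose_mul, Matrix.transpose_transpose]
    rw [eT, ← tailT_mul_head r hrm Ut U]
    exact a2'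
  have b2 : specNorm ((tailCols r hrn V)ᵀ * headCols r hrn Vt)
      ≤ specNorm F / sg ⟨r - 1, by omega⟩ := by
    have hW : (Vᵀ * Vt)ᵀ * (Vᵀ * Vt) = 1 := by
      rw [Matrix.transpose_mul, Matrix.transpose_transpose,
        Matrix.mul_assoc Vtᵀ V (Vᵀ * Vt), ← Matrix.mul_assoc V Vᵀ Vt, hVVt,
        Matrix.one_mul]
      exact hVt
    have hbr := bridge hrn hW
    rw [tailT_mul_head r hrn V Vt]
    refine le_trans hbr ?_
    have eT : (Vᵀ * Vt)ᵀ = Vtᵀ * V := by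
      rw [Matrix.transpose_mul, Matrix.transpose_transpose]
    rw [eT, ← tailT_mul_head r hrn Vt V]
    exact b2'
  rcases le_total (sg ⟨r - 1, by omega⟩) (sgt ⟨r - 1, by omega⟩) with hmx | hmx
  · rw [max_eq_right hmx]
    exact max_le a1 b1
  · rw [max_eq_left hmx]
    exact max_le a2 b2
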